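/- If L₁, L₂ ∈ Sp(2n,ℝ) and ½L₁ᵀL₁ ≥ ½L₂ᵀL₂ (in the positive semidefinite order), then L₁ᵀL₁ = L₂ᵀL₂. -/

import Mathlib

open Matrix
open scoped ComplexOrder

noncomputable section

/-- The standard symplectic form matrix J = [[0, -I],[I, 0]] of order 2n. -/
def sympJ (n : ℕ) : Matrix (Fin n ⊕ Fin n) (Fin n ⊕ Fin n) ℝ :=
  Matrix.fromBlocks 0 (-1) 1 0

/-- A real 2n×2n matrix L is symplectic if Lᵀ J L = J. -/
def IsSymplectic {n : ℕ} (L : Matrix (Fin n ⊕ Fin n) (Fin n ⊕ Fin n) ℝ) : Prop :=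
  Lᵀ * sympJ n * L = sympJ n

/-- The convex set K_n of Gaussian covariance matrices:
real symmetric S of order 2n with 2S - iJ positive semidefinite (as a complex matrix). -/
def Kset (n : ℕ) : Set (Matrix (Fin n ⊕ Fin n) (Fin n ⊕ Fin n) ℝ) :=
  {S | S.IsSymm ∧
    ((2 : ℂ) • S.map (Complex.ofReal) - Complex.I • (sympJ n).map (Complex.ofReal)).PosSemidef}

lemma sympJ_mul_sympJ (n : ℕ) : sympJ n * sympJ n = -1 := by
  rw [sympJ, Matrix.fromBlocks_multiply]
  simp [← Matrix.fromBlocks_one]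
  rw [Matrix.fromBlocks_neg]
  simp

lemma sympJ_det_ne_zero (n : ℕ) : (sympJ n).det ≠ 0 := by
  have h : (sympJ n).det * (sympJ n).det = 1 := by
    rw [← Matrix.det_mul, sympJ_mul_sympJ, Matrix.det_neg]
    simp [Fintype.card_sum, Even.neg_one_pow ⟨n, rfl⟩]
  intro h0
  rw [h0] at h
  norm_num at h

lemma det_mul_self_of_symplectic {n : ℕ} {L : Matrix (Fin n ⊕ Fin n) (Fin n ⊕ Fin n) ℝ}
    (hL : IsSymplectic L) : L.det * L.det = 1 := by
  have h := congrArg Matrix.det hL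
  rw [Matrix.det_mul, Matrix.det_mul, Matrix.det_transpose] at h
  have := sympJ_det_ne_zero n
  apply mul_right_cancel₀ this
  rw [one_mul]
  linear_combination h

open scoped MatrixOrder in
theorem exists_herm_sqrt_aux {m : Type*} [Fintype m] [DecidableEq m] (P : Matrix m m ℝ)
    (hP : P.PosSemidef) : ∃ S : Matrix m m ℝ, S * S = P ∧ S.IsHermitian :=
  ⟨CFC.sqrt P, CFC.sqrt_mul_sqrt_self P hP.nonneg, (CFC.sqrt_nonneg P).posSemidef.1⟩

theorem comparable_extreme_points_eq (n : ℕ)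
    (L₁ L₂ : Matrix (Fin n ⊕ Fin n) (Fin n ⊕ Fin n) ℝ)
    (h₁ : IsSymplectic L₁) (h₂ : IsSymplectic L₂)
    (h : ((1 / 2 : ℝ) • (L₁ᵀ * L₁) - (1 / 2 : ℝ) • (L₂ᵀ * L₂)).PosSemidef) :
    L₁ᵀ * L₁ = L₂ᵀ * L₂ := by
  classical
  have hd₁ := det_mul_self_of_symplectic h₁
  have hd₂ := det_mul_self_of_symplectic h₂
  set P₁ := L₁ᵀ * L₁ with hP₁def
  set P₂ := L₂ᵀ * L₂ with hP₂def
  have hP₁det : P₁.det = 1 := by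
    rw [hP₁def, Matrix.det_mul, Matrix.det_transpose]; exact hd₁
  have hP₂det : P₂.det = 1 := by
    rw [hP₂def, Matrix.det_mul, Matrix.det_transpose]; exact hd₂
  have hP₂psd : P₂.PosSemidef := by
    have := Matrix.posSemidef_conjTranspose_mul_self L₂
    rwa [Matrix.conjTranspose_eq_transpose_of_trivial] at this
  -- square root of P₂
  obtain ⟨S, hSS, hSher⟩ := exists_herm_sqrt_aux P₂ hP₂psd
  have hSdet : S.det * S.det = 1 := by rw [← Matrix.det_mul, hSS, hP₂det]
  have hSdetne : S.det ≠ 0 := by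
    intro h0; rw [h0] at hSdet; norm_num at hSdet
  have hSu : IsUnit S.det := isUnit_iff_ne_zero.mpr hSdetne
  have hSS' : S * S⁻¹ = 1 := Matrix.mul_nonsing_inv S hSu
  have hS'S : S⁻¹ * S = 1 := Matrix.nonsing_inv_mul S hSu
  have hSinvher : (S⁻¹).IsHermitian := hSher.inv
  -- the PSD difference
  have hP₁psd : P₁.PosSemidef := by
    have := Matrix.posSemidef_conjTranspose_mul_self L₁
    rwa [Matrix.conjTranspose_eq_transpose_of_trivial] at this
  have hA : (P₁ - P₂).PosSemidef := by
    obtain ⟨hh, hq⟩ := Matrix.posSemidef_iff_dotProduct_mulVec.mp h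
    rw [Matrix.posSemidef_iff_dotProduct_mulVec]
    constructor
    · exact hP₁psd.1.sub hP₂psd.1
    · intro x
      have hx := hq x
      have heq : ((1 / 2 : ℝ) • P₁ - (1 / 2 : ℝ) • P₂) = (1 / 2 : ℝ) • (P₁ - P₂) := by
        rw [smul_sub]
      rw [heq, Matrix.smul_mulVec, dotProduct_smul] at hx
      have : (0 : ℝ) ≤ (1 / 2 : ℝ) * dotProduct (star x) ((P₁ - P₂) *ᵥ x) := hx
      linarith
  set M := S⁻¹ * (P₁ - P₂) * S⁻¹ with hMdef
  have hM : M.PosSemidef := by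
    have := hA.conjTranspose_mul_mul_same (S⁻¹)
    rwa [hSinvher.eq] at this
  have hMher := hM.1
  have hν : ∀ i, 0 ≤ hMher.eigenvalues i := hM.eigenvalues_nonneg
  -- 1 + M = S⁻¹ P₁ S⁻¹
  have hmid : S⁻¹ * P₂ * S⁻¹ = 1 := by
    rw [← hSS]
    calc S⁻¹ * (S * S) * S⁻¹ = (S⁻¹ * S) * (S * S⁻¹) := by
          simp only [Matrix.mul_assoc]
      _ = 1 := by rw [hS'S, hSS', one_mul]
  have hone : (1 : Matrix (Fin n ⊕ Fin n) (Fin n ⊕ Fin n) ℝ) + M = S⁻¹ * P₁ * S⁻¹ := by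
    rw [hMdef, Matrix.mul_sub, Matrix.sub_mul, ← hmid]
    abel
  have hdet1M : ((1 : Matrix (Fin n ⊕ Fin n) (Fin n ⊕ Fin n) ℝ) + M).det = 1 := by
    rw [hone, Matrix.det_mul, Matrix.det_mul, hP₁det, Matrix.det_nonsing_inv,
      Ring.inverse_eq_inv']
    rw [mul_one, ← mul_inv, hSdet]
    norm_num
  -- spectral theorem
  set U : Matrix (Fin n ⊕ Fin n) (Fin n ⊕ Fin n) ℝ :=
    (↑(Matrix.IsHermitian.eigenvectorUnitary hMher) : Matrix (Fin n ⊕ Fin n) (Fin n ⊕ Fin n) ℝ)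
    with hUdef
  have hU : U * star U = 1 := Matrix.mem_unitaryGroup_iff.mp hMher.eigenvectorUnitary.2
  have hspec : M = U * Matrix.diagonal (RCLike.ofReal ∘ hMher.eigenvalues) * star U :=
    hMher.spectral_theorem
  have hdiag : Matrix.diagonal (fun i => 1 + hMher.eigenvalues i)
      = 1 + Matrix.diagonal (RCLike.ofReal ∘ hMher.eigenvalues) := by
    rw [← Matrix.diagonal_one, Matrix.diagonal_add]
    congr 1
  have h1M : (1 : Matrix (Fin n ⊕ Fin n) (Fin n ⊕ Fin n) ℝ) + M
      = U * Matrix.diagonal (fun i => 1 + hMher.eigenvalues i) * star U := by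
    rw [hdiag, Matrix.mul_add, Matrix.add_mul, Matrix.mul_one, hU]
    exact congrArg (HAdd.hAdd 1) hspec
  have hud : U.det * (star U).det = 1 := by
    rw [← Matrix.det_mul, hU, Matrix.det_one]
  have hprod : ∏ i, (1 + hMher.eigenvalues i) = 1 := by
    rw [h1M, Matrix.det_mul, Matrix.det_mul, Matrix.det_diagonal] at hdet1M
    linear_combination hdet1M - (∏ i, (1 + hMher.eigenvalues i)) * hud
  have hνzero : ∀ i, hMher.eigenvalues i = 0 := by
    intro j
    have hrest : 1 ≤ ∏ i ∈ Finset.univ.erase j, (1 + hMher.eigenvalues i) := by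
      calc (1 : ℝ) = ∏ _i ∈ Finset.univ.erase j, (1 : ℝ) := by simp
        _ ≤ _ := Finset.prod_le_prod (fun i _ => by norm_num)
              (fun i _ => by nlinarith [hν i])
    have key : (1 + hMher.eigenvalues j) *
        ∏ i ∈ Finset.univ.erase j, (1 + hMher.eigenvalues i) = 1 := by
      rw [Finset.mul_prod_erase Finset.univ (fun i => 1 + hMher.eigenvalues i)
        (Finset.mem_univ j), hprod]
    have hpos : (0 : ℝ) ≤ 1 + hMher.eigenvalues j := by linarith [hν j]
    have hle : (1 + hMher.eigenvalues j) * 1 ≤ (1 + hMher.eigenvalues j) *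
        ∏ i ∈ Finset.univ.erase j, (1 + hMher.eigenvalues i) :=
      mul_le_mul_of_nonneg_left hrest hpos
    rw [key, mul_one] at hle
    linarith [hν j]
  have hM0 : M = 0 := by
    rw [hspec]
    have : Matrix.diagonal (RCLike.ofReal ∘ hMher.eigenvalues)
        = (0 : Matrix (Fin n ⊕ Fin n) (Fin n ⊕ Fin n) ℝ) := by
      ext i j
      by_cases hij : i = j
      · subst hij; simp [Matrix.diagonal_apply_eq, hνzero]
      · simp [Matrix.diagonal_apply_ne _ hij]
    rw [this]
    simp
  have hfinal : P₁ - P₂ = S * M * S := by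
    rw [hMdef]
    calc P₁ - P₂ = (S * S⁻¹) * (P₁ - P₂) * (S⁻¹ * S) := by rw [hSS', hS'S]; simp
      _ = S * (S⁻¹ * (P₁ - P₂) * S⁻¹) * S := by
          simp only [Matrix.mul_assoc]
  rw [hM0] at hfinal
  simp at hfinal
  exact sub_eq_zero.mp hfinal
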